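/- Fix reference prices P_X, P_Y > 0, p₀ = P_X/P_Y, and budget B > 0. Let ψ(p_X, p_Y) = p_X·p_Y/(p_X + p_Y)² for (p_X, p_Y) ∈ (0, P_X] × (0, P_Y] and 0 otherwise. Then there exists c > 0 such that, with L(p) = c·p/(1 + p) for p > 0 (the liquidity allocation implied by the LMSR trading function f(x, y) = 2 − e^{−x} − e^{−y}), Y₀ = ∫₀^{p₀} L(p)/p dp = c·ln(1 + p₀), X₀ = ∫_{p₀}^∞ L(p)/p² dp = c·ln((1 + p₀)/p₀), and P_X·X₀ + P_Y·Y₀ = B, the triple (L, X₀, Y₀) is optimal for ψ. -/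

import Mathlib

open MeasureTheory Set
open scoped ENNReal

noncomputable section

/-- The open positive orthant of `ℝ²`, on which prices live. -/
def orth : Set (ℝ × ℝ) := Set.Ioi 0 ×ˢ Set.Ioi 0

/-- The expected CFMM inefficiency `I_ψ(L) = ∬ ψ(p_X,p_Y) / (p_Y·L(p_X/p_Y)) dp_X dp_Y`,
a Lebesgue integral valued in `[0,∞]`; `ENNReal` division encodes the conventions
`c/0 = ∞` for `c > 0` and `0/0 = 0`. -/
def Ineff (ψ : ℝ × ℝ → ℝ) (L : ℝ → ℝ) : ℝ≥0∞ :=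
  ∫⁻ q in orth, ENNReal.ofReal (ψ q) / ENNReal.ofReal (q.2 * L (q.1 / q.2))

/-- Feasibility of a triple `(L, X₀, Y₀)` of a liquidity allocation and initial reserves,
for reference prices `P_X, P_Y` (so `p₀ = P_X / P_Y`) and budget `B`. -/
def Feasible (PX PY B : ℝ) (L : ℝ → ℝ) (X0 Y0 : ℝ) : Prop :=
  Measurable L ∧ (∀ p ∈ Set.Ioi (0:ℝ), 0 ≤ L p) ∧ 0 ≤ X0 ∧ 0 ≤ Y0 ∧
  (∫⁻ p in Set.Ioc (0:ℝ) (PX / PY), ENNReal.ofReal (L p / p)) ≤ ENNReal.ofReal Y0 ∧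
  (∫⁻ p in Set.Ioi (PX / PY), ENNReal.ofReal (L p / p ^ 2)) ≤ ENNReal.ofReal X0 ∧
  PX * X0 + PY * Y0 ≤ B

/-- A feasible triple is optimal for the belief `ψ` if it minimizes the expected CFMM
inefficiency over all feasible triples. -/
def IsOptimal (PX PY B : ℝ) (ψ : ℝ × ℝ → ℝ) (L : ℝ → ℝ) (X0 Y0 : ℝ) : Prop :=
  Feasible PX PY B L X0 Y0 ∧
  ∀ L' X0' Y0', Feasible PX PY B L' X0' Y0' → Ineff ψ L ≤ Ineff ψ L'


/-!
STATEMENT 15: For the belief `ψ(p_X, p_Y) = p_X·p_Y/(p_X + p_Y)²` on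
`(0, P_X] × (0, P_Y]` (and `0` elsewhere), the allocation `L(p) = c·p/(1+p)` implied by
the LMSR trading function `f(x,y) = 2 − e^{−x} − e^{−y}` — with the reserves it implies,
`Y₀ = c·ln(1+p₀)` and `X₀ = c·ln((1+p₀)/p₀)`, and the budget spent exactly — is optimal,
for a suitable `c > 0`.
-/

lemma L1 {t : ℝ} (ht : 0 < t) :
    ∫⁻ p in Set.Ioc (0:ℝ) t, ENNReal.ofReal ((1+p)⁻¹) = ENNReal.ofReal (Real.log (1+t)) := by
  have hint : IntegrableOn (fun p : ℝ => (1+p)⁻¹) (Set.Ioc 0 t) := by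
    apply (ContinuousOn.integrableOn_Icc ?_).mono_set Set.Ioc_subset_Icc_self
    exact (continuousOn_const.add (continuousOn_id' _)).inv₀
      (fun x hx => by simp only [Pi.add_apply]; nlinarith [hx.1])
  rw [← ofReal_integral_eq_lintegral_ofReal hint
      (by filter_upwards [ae_restrict_mem measurableSet_Ioc] with x hx
          using by have := hx.1; positivity)]
  congr 1
  rw [← intervalIntegral.integral_of_le ht.le]
  have h2 : ∫ x in (0:ℝ)..t, (1+x)⁻¹ = ∫ x in (1:ℝ)..(1+t), x⁻¹ := by
    simpa using intervalIntegral.integral_comp_add_left (a := 0) (b := t) (fun x => x⁻¹) 1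
  rw [h2, integral_inv_of_pos one_pos (by linarith)]
  congr 1
  field_simp

lemma L2 {t : ℝ} (ht : 0 < t) :
    ∫⁻ p in Set.Ioi t, ENNReal.ofReal ((p*(1+p))⁻¹) = ENNReal.ofReal (Real.log ((1+t)/t)) := by
  set g : ℝ → ℝ := fun p => Real.log p - Real.log (1+p) with hg
  have hderiv : ∀ x ∈ Set.Ioi t, HasDerivAt g ((x*(1+x))⁻¹) x := by
    intro x hx
    have hx0 : 0 < x := lt_trans ht hx
    have h1 : HasDerivAt g (x⁻¹ - (1+x)⁻¹) x := by
      have := (Real.hasDerivAt_log hx0.ne').sub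
        (((hasDerivAt_id x).const_add 1).log (by positivity))
      exact this.congr_deriv (by simp)
    have h2 : x⁻¹ - (1+x)⁻¹ = (x*(1+x))⁻¹ := by
      rw [inv_sub_inv hx0.ne' (show (1+x) ≠ 0 by positivity),
        show 1+x-x = (1:ℝ) by ring, one_div]
    rwa [h2] at h1
  have hcont : ContinuousWithinAt g (Set.Ici t) t := by
    apply ContinuousAt.continuousWithinAt
    exact (Real.continuousAt_log ht.ne').sub
      ((Real.continuousAt_log (by positivity)).comp (by fun_prop))
  have htend : Filter.Tendsto g Filter.atTop (nhds 0) := by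
    have hev : ∀ᶠ x in Filter.atTop, -Real.log (1 + x⁻¹) = g x := by
      filter_upwards [Filter.eventually_gt_atTop 0] with x hx
      rw [hg]
      simp only
      rw [show (1+x⁻¹:ℝ) = (1+x)/x by rw [add_div, div_self hx.ne', one_div]; ring,
        Real.log_div (by positivity) hx.ne']
      ring
    apply Filter.Tendsto.congr' hev
    have h1 : Filter.Tendsto (fun x : ℝ => 1 + x⁻¹) Filter.atTop (nhds (1+0)) :=
      tendsto_const_nhds.add tendsto_inv_atTop_zero
    rw [add_zero] at h1
    have h2 := (Real.continuousAt_log one_ne_zero).tendsto.comp h1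
    simpa using h2.neg
  have hpos : ∀ x ∈ Set.Ioi t, 0 ≤ (x*(1+x))⁻¹ := by
    intro x hx
    have : 0 < x := lt_trans ht hx
    positivity
  have hint := integrableOn_Ioi_deriv_of_nonneg hcont hderiv hpos htend
  have hval := integral_Ioi_of_hasDerivAt_of_nonneg hcont hderiv hpos htend
  rw [← ofReal_integral_eq_lintegral_ofReal hint
      (by filter_upwards [ae_restrict_mem measurableSet_Ioi] with x hx using hpos x hx)]
  rw [hval]
  congr 1
  rw [hg]
  simp only
  rw [Real.log_div (by positivity) ht.ne']
  ring

lemma subst {y : ℝ} (hy : 0 < y) (f : ℝ → ℝ≥0∞) (hf : Measurable f) :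
    ∫⁻ x in Set.Ioi (0:ℝ), f x = ∫⁻ p in Set.Ioi (0:ℝ), ENNReal.ofReal y * f (y*p) := by
  have hpre : (fun p : ℝ => y*p) ⁻¹' Set.Ioi 0 = Set.Ioi 0 := by
    ext p; simp [Set.mem_preimage, mul_pos_iff_of_pos_left, hy]
  have hmap : Measure.map (fun p : ℝ => y*p) (volume.restrict (Set.Ioi 0))
      = ENNReal.ofReal y⁻¹ • volume.restrict (Set.Ioi 0) := by
    rw [show volume.restrict (Set.Ioi (0:ℝ))
        = volume.restrict ((fun p : ℝ => y*p) ⁻¹' Set.Ioi 0) by rw [hpre],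
      ← Measure.restrict_map (measurable_const_mul y) measurableSet_Ioi,
      Real.map_volume_mul_left hy.ne', Measure.restrict_smul,
      abs_of_pos (by positivity)]
    rw [hpre]
  have h1 : ∫⁻ p in Set.Ioi (0:ℝ), f (y*p)
      = ENNReal.ofReal y⁻¹ * ∫⁻ x in Set.Ioi (0:ℝ), f x := by
    rw [← lintegral_map hf (measurable_const_mul y), hmap, lintegral_smul_measure, smul_eq_mul]
  rw [lintegral_const_mul' _ _ ENNReal.ofReal_ne_top, h1, ← mul_assoc,
    ENNReal.ofReal_inv_of_pos hy, ENNReal.mul_inv_cancel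
      (ENNReal.ofReal_pos.2 hy).ne' ENNReal.ofReal_ne_top, one_mul]

lemma Jint {PX PY : ℝ} (hPX : 0 ≤ PX) (hPY : 0 ≤ PY) {t : ℝ} (ht : 0 < t) :
    ∫⁻ p in Set.Ioi (0:ℝ),
        ENNReal.ofReal (if p ≤ t then PY * (1+p)⁻¹ else PX * (p*(1+p))⁻¹)
      = ENNReal.ofReal (PY * Real.log (1+t) + PX * Real.log ((1+t)/t)) := by
  rw [← Set.Ioc_union_Ioi_eq_Ioi ht.le,
    lintegral_union measurableSet_Ioi (Set.Ioc_disjoint_Ioi le_rfl)]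
  have e1 : ∫⁻ p in Set.Ioc (0:ℝ) t,
      ENNReal.ofReal (if p ≤ t then PY * (1+p)⁻¹ else PX * (p*(1+p))⁻¹)
      = ∫⁻ p in Set.Ioc (0:ℝ) t, ENNReal.ofReal PY * ENNReal.ofReal ((1+p)⁻¹) := by
    apply setLIntegral_congr_fun_ae measurableSet_Ioc
    filter_upwards with p hp
    rw [if_pos hp.2, ENNReal.ofReal_mul hPY]
  have e2 : ∫⁻ p in Set.Ioi t,
      ENNReal.ofReal (if p ≤ t then PY * (1+p)⁻¹ else PX * (p*(1+p))⁻¹)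
      = ∫⁻ p in Set.Ioi t, ENNReal.ofReal PX * ENNReal.ofReal ((p*(1+p))⁻¹) := by
    apply setLIntegral_congr_fun_ae measurableSet_Ioi
    filter_upwards with p hp
    rw [if_neg (not_le.2 hp), ENNReal.ofReal_mul hPX]
  rw [e1, e2, lintegral_const_mul' _ _ ENNReal.ofReal_ne_top,
    lintegral_const_mul' _ _ ENNReal.ofReal_ne_top, L1 ht, L2 ht,
    ← ENNReal.ofReal_mul hPY, ← ENNReal.ofReal_mul hPX, ← ENNReal.ofReal_add (by
      have := Real.log_nonneg (by linarith : (1:ℝ) ≤ 1+t); positivity) (by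
      have : 1 ≤ (1+t)/t := by rw [le_div_iff₀ ht]; linarith
      have := Real.log_nonneg this; positivity)]

lemma ineff_formula {PX PY : ℝ} (hPX : 0 < PX) (hPY : 0 < PY)
    {L : ℝ → ℝ} (hL : Measurable L) (ψ : ℝ × ℝ → ℝ)
    (hψ : ψ = fun q => if q.1 ∈ Set.Ioc (0:ℝ) PX ∧ q.2 ∈ Set.Ioc (0:ℝ) PY
        then q.1 * q.2 / (q.1 + q.2) ^ 2 else 0) :
    Ineff ψ L = ∫⁻ p in Set.Ioi (0:ℝ),
      ENNReal.ofReal (min PY (PX/p) * (p/(1+p)^2)) / ENNReal.ofReal (L p) := by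
  set ρ := volume.restrict (Set.Ioi (0:ℝ)) with hρ
  set Φ : ℝ → ℝ≥0∞ := fun p => ENNReal.ofReal (p/(1+p)^2) / ENNReal.ofReal (L p) with hΦ
  set H : ℝ → ℝ → ℝ≥0∞ := fun y p => if y ≤ PY ∧ p*y ≤ PX then Φ p else 0 with hH
  set F : ℝ × ℝ → ℝ≥0∞ :=
    fun q => ENNReal.ofReal (ψ q) / ENNReal.ofReal (q.2 * L (q.1 / q.2)) with hF
  have hΦm : Measurable Φ := by
    apply Measurable.div
    · exact ENNReal.measurable_ofReal.comp
        (measurable_id.div ((measurable_const.add measurable_id).pow_const 2))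
    · exact ENNReal.measurable_ofReal.comp hL
  have hψm : Measurable ψ := by
    rw [hψ]
    apply Measurable.ite
    · exact (measurableSet_Ioc.prod measurableSet_Ioc :
        MeasurableSet (Set.Ioc (0:ℝ) PX ×ˢ Set.Ioc (0:ℝ) PY))
    · exact (measurable_fst.mul measurable_snd).div
        ((measurable_fst.add measurable_snd).pow_const 2)
    · exact measurable_const
  have hFm : Measurable F := by
    apply Measurable.div
    · exact ENNReal.measurable_ofReal.comp hψm
    · exact ENNReal.measurable_ofReal.comp
        (measurable_snd.mul (hL.comp (measurable_fst.div measurable_snd)))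
  have hHm : Measurable (fun z : ℝ × ℝ => H z.1 z.2) := by
    apply Measurable.ite
    · exact (measurableSet_le measurable_fst measurable_const).inter
        (measurableSet_le (measurable_snd.mul measurable_fst) measurable_const)
    · exact hΦm.comp measurable_snd
    · exact measurable_const
  have hprod : (volume : Measure (ℝ × ℝ)).restrict orth = ρ.prod ρ := by
    rw [hρ, Measure.prod_restrict, ← Measure.volume_eq_prod, orth]
  have step1 : Ineff ψ L = ∫⁻ y, ∫⁻ x, F (x, y) ∂ρ ∂ρ := by
    rw [Ineff, ← hF, hprod, lintegral_prod_symm F hFm.aemeasurable]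
  have step2 : ∀ y ∈ Set.Ioi (0:ℝ), ∫⁻ x, F (x, y) ∂ρ = ∫⁻ p, H y p ∂ρ := by
    intro y hy
    rw [hρ, subst hy (fun x => F (x, y)) (hFm.comp (measurable_id.prodMk measurable_const))]
    apply setLIntegral_congr_fun_ae measurableSet_Ioi
    filter_upwards with p hp
    have hp0 : (0:ℝ) < p := hp
    have hdiv : y * p / y = p := mul_div_cancel_left₀ p (ne_of_gt hy)
    have hy0 : (0:ℝ) < y := hy
    have hcond : ((y*p) ∈ Set.Ioc 0 PX ∧ y ∈ Set.Ioc (0:ℝ) PY) ↔ (y ≤ PY ∧ p*y ≤ PX) := by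
      constructor
      · rintro ⟨⟨-, h1⟩, ⟨-, h2⟩⟩
        exact ⟨h2, by rwa [mul_comm] at h1⟩
      · rintro ⟨h1, h2⟩
        exact ⟨⟨mul_pos hy0 hp0, by rwa [mul_comm] at h2⟩, ⟨hy0, h1⟩⟩
    by_cases hc : y ≤ PY ∧ p*y ≤ PX
    · have hcond' : ((y*p) ∈ Set.Ioc 0 PX ∧ y ∈ Set.Ioc (0:ℝ) PY) := hcond.2 hc
      rw [hF, hH]
      simp only [hψ, hdiv, if_pos hcond', if_pos hc]
      have hval : (y*p)*y/((y*p)+y)^2 = p/(1+p)^2 := by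
        rw [show (y*p)+y = y*(1+p) by ring, mul_pow, show (y*p)*y = y^2*p by ring,
          mul_div_mul_left _ _ (pow_ne_zero 2 (ne_of_gt hy0))]
      rw [hval, ENNReal.ofReal_mul hy.le, ← mul_div_assoc,
        ENNReal.mul_div_mul_left _ _ (ENNReal.ofReal_pos.2 hy).ne' ENNReal.ofReal_ne_top]
    · have hcond' : ¬((y*p) ∈ Set.Ioc 0 PX ∧ y ∈ Set.Ioc (0:ℝ) PY) := fun h => hc (hcond.1 h)
      rw [hF, hH]
      simp only [hψ, hdiv, if_neg hcond', if_neg hc, ENNReal.ofReal_zero, ENNReal.zero_div, mul_zero]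
  have step3 : ∫⁻ y, ∫⁻ p, H y p ∂ρ ∂ρ = ∫⁻ p, ∫⁻ y, H y p ∂ρ ∂ρ :=
    lintegral_lintegral_swap hHm.aemeasurable
  have step4 : ∀ p ∈ Set.Ioi (0:ℝ),
      ∫⁻ y, H y p ∂ρ = ENNReal.ofReal (min PY (PX/p)) * Φ p := by
    intro p hp
    have hp0 : (0:ℝ) < p := hp
    set m := min PY (PX/p) with hm
    have hm0 : 0 < m := lt_min hPY (by positivity)
    have key : ∀ y : ℝ, (Set.Ioi (0:ℝ)).indicator (fun y => H y p) y
        = (Set.Ioc (0:ℝ) m).indicator (fun _ => Φ p) y := by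
      intro y
      by_cases hy : (0:ℝ) < y
      · rw [Set.indicator_of_mem (Set.mem_Ioi.2 hy)]
        by_cases hc : y ≤ PY ∧ p*y ≤ PX
        · rw [hH]
          simp only [if_pos hc]
          exact (Set.indicator_of_mem (show y ∈ Set.Ioc (0:ℝ) m from ⟨hy, le_min hc.1
            ((le_div_iff₀ hp0).2 (by rw [mul_comm]; exact hc.2))⟩) (fun _ => Φ p)).symm
        · rw [hH]
          simp only [if_neg hc]
          exact (Set.indicator_of_notMem (fun hmem => hc ⟨hmem.2.trans (min_le_left _ _),
            by rw [mul_comm]; exact (le_div_iff₀ hp0).1 (hmem.2.trans (min_le_right _ _))⟩)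
            (fun _ => Φ p)).symm
      · rw [Set.indicator_of_notMem (fun h => hy (Set.mem_Ioi.1 h)), Set.indicator_of_notMem (fun h => hy h.1)]
    rw [hρ, ← lintegral_indicator measurableSet_Ioi]
    simp_rw [key]
    rw [lintegral_indicator measurableSet_Ioc, setLIntegral_const, Real.volume_Ioc,
      sub_zero, mul_comm]
  rw [step1]
  rw [setLIntegral_congr_fun_ae measurableSet_Ioi
    (by filter_upwards with y hy using step2 y hy : ∀ᵐ y ∂volume, y ∈ Set.Ioi (0:ℝ) →
      (fun y => ∫⁻ x, F (x, y) ∂ρ) y = (fun y => ∫⁻ p, H y p ∂ρ) y)]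
  rw [step3]
  apply setLIntegral_congr_fun_ae measurableSet_Ioi
  filter_upwards with p hp
  have hp0 : (0:ℝ) < p := hp
  rw [step4 p hp, hΦ]
  simp only
  rw [← mul_div_assoc, ← ENNReal.ofReal_mul (le_min hPY.le (div_nonneg hPX.le hp0.le))]


set_option maxHeartbeats 1000000 in
theorem stmt_15 (PX PY B : ℝ) (hPX : 0 < PX) (hPY : 0 < PY) (hB : 0 < B)
    (ψ : ℝ × ℝ → ℝ)
    (hψ : ψ = fun q => if q.1 ∈ Set.Ioc (0:ℝ) PX ∧ q.2 ∈ Set.Ioc (0:ℝ) PY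
        then q.1 * q.2 / (q.1 + q.2) ^ 2 else 0) :
    ∃ c > (0:ℝ), ∃ X0 Y0 : ℝ,
      Y0 = c * Real.log (1 + PX / PY) ∧
      X0 = c * Real.log ((1 + PX / PY) / (PX / PY)) ∧
      (∫⁻ p in Set.Ioc (0:ℝ) (PX / PY),
          ENNReal.ofReal ((c * (p / (1 + p))) / p)) = ENNReal.ofReal Y0 ∧
      (∫⁻ p in Set.Ioi (PX / PY),
          ENNReal.ofReal ((c * (p / (1 + p))) / p ^ 2)) = ENNReal.ofReal X0 ∧
      PX * X0 + PY * Y0 = B ∧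
      Feasible PX PY B (fun p => c * (p / (1 + p))) X0 Y0 ∧
      ∀ L' X0' Y0', Feasible PX PY B L' X0' Y0' →
        Ineff ψ (fun p => c * (p / (1 + p))) ≤ Ineff ψ L' := by
  have ht : 0 < PX / PY := div_pos hPX hPY
  set t := PX / PY with htdef
  set l1 := Real.log (1 + t) with hl1def
  set l2 := Real.log ((1 + t) / t) with hl2def
  have hl1 : 0 < l1 := Real.log_pos (by linarith)
  have hl2 : 0 ≤ l2 := Real.log_nonneg (by rw [le_div_iff₀ ht]; linarith)
  set M := PY * l1 + PX * l2 with hMdef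
  have hM0 : 0 < M := add_pos_of_pos_of_nonneg (mul_pos hPY hl1) (mul_nonneg hPX.le hl2)
  set c := B / M with hcdef
  have hc0 : 0 < c := div_pos hB hM0
  -- the two reserve integrals
  have hY : (∫⁻ p in Set.Ioc (0:ℝ) t, ENNReal.ofReal ((c * (p / (1 + p))) / p))
      = ENNReal.ofReal (c * l1) := by
    have e : ∀ᵐ p ∂volume, p ∈ Set.Ioc (0:ℝ) t →
        ENNReal.ofReal ((c * (p / (1 + p))) / p)
          = ENNReal.ofReal c * ENNReal.ofReal ((1+p)⁻¹) := by
      filter_upwards with p hp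
      have h1 : 0 < p := hp.1
      have h2 : (0:ℝ) < 1 + p := by linarith
      rw [show (c * (p / (1 + p))) / p = c * (1+p)⁻¹ by field_simp,
        ENNReal.ofReal_mul hc0.le]
    rw [setLIntegral_congr_fun_ae measurableSet_Ioc e,
      lintegral_const_mul' _ _ ENNReal.ofReal_ne_top, L1 ht, ← ENNReal.ofReal_mul hc0.le]
  have hX : (∫⁻ p in Set.Ioi t, ENNReal.ofReal ((c * (p / (1 + p))) / p ^ 2))
      = ENNReal.ofReal (c * l2) := by
    have e : ∀ᵐ p ∂volume, p ∈ Set.Ioi t →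
        ENNReal.ofReal ((c * (p / (1 + p))) / p ^ 2)
          = ENNReal.ofReal c * ENNReal.ofReal ((p*(1+p))⁻¹) := by
      filter_upwards with p hp
      have h1 : 0 < p := lt_trans ht hp
      have h2 : (0:ℝ) < 1 + p := by linarith
      rw [show (c * (p / (1 + p))) / p ^ 2 = c * (p*(1+p))⁻¹ by field_simp,
        ENNReal.ofReal_mul hc0.le]
    rw [setLIntegral_congr_fun_ae measurableSet_Ioi e,
      lintegral_const_mul' _ _ ENNReal.ofReal_ne_top, L2 ht, ← ENNReal.ofReal_mul hc0.le]
  have hbudget : PX * (c * l2) + PY * (c * l1) = B := by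
    rw [hcdef]
    field_simp
    ring
  have hLmeas : Measurable (fun p : ℝ => c * (p / (1 + p))) :=
    measurable_const.mul (measurable_id.div (measurable_const.add measurable_id))
  have hLnn : ∀ p ∈ Set.Ioi (0:ℝ), 0 ≤ c * (p / (1 + p)) := by
    intro p hp
    have h1 : (0:ℝ) < p := hp
    have h2 : (0:ℝ) < 1 + p := by linarith
    positivity
  have hFeas : Feasible PX PY B (fun p => c * (p / (1 + p))) (c * l2) (c * l1) :=
    ⟨hLmeas, hLnn, mul_nonneg hc0.le hl2, mul_nonneg hc0.le hl1.le,
      le_of_eq hY, le_of_eq hX, le_of_eq hbudget⟩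
  -- value of the inefficiency of our allocation
  have hIme : Ineff ψ (fun p => c * (p / (1 + p))) = ENNReal.ofReal (M * M / B) := by
    rw [ineff_formula hPX hPY hLmeas ψ hψ]
    have e : ∀ᵐ p ∂volume, p ∈ Set.Ioi (0:ℝ) →
        ENNReal.ofReal (min PY (PX/p) * (p/(1+p)^2)) / ENNReal.ofReal (c * (p / (1 + p)))
        = ENNReal.ofReal (if p ≤ t then (PY/c) * (1+p)⁻¹ else (PX/c) * (p*(1+p))⁻¹) := by
      filter_upwards with p hp
      have h1 : (0:ℝ) < p := hp
      have h2 : (0:ℝ) < 1 + p := by linarith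
      have hden : 0 < c * (p / (1 + p)) := by positivity
      rw [← ENNReal.ofReal_div_of_pos hden]
      congr 1
      by_cases hpt : p ≤ t
      · rw [if_pos hpt, min_eq_left ((le_div_iff₀ h1).2
          (by rw [mul_comm]; exact (le_div_iff₀ hPY).1 hpt))]
        field_simp
      · rw [if_neg hpt, min_eq_right ((div_le_iff₀ h1).2
          (by nlinarith [(div_lt_iff₀ hPY).1 (not_le.1 hpt)]))]
        field_simp
    rw [setLIntegral_congr_fun_ae measurableSet_Ioi e,
      Jint (div_nonneg hPX.le hc0.le) (div_nonneg hPY.le hc0.le) ht]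
    congr 1
    rw [hcdef]
    field_simp
    ring
  refine ⟨c, hc0, c * l2, c * l1, rfl, rfl, hY, hX, hbudget, hFeas, ?_⟩
  -- optimality
  intro L' X0' Y0' hF'
  obtain ⟨hL'm, hL'0, hX0', hY0', hYint, hXint, hbud'⟩ := hF'
  rw [hIme, ineff_formula hPX hPY hL'm ψ hψ]
  set IW := ∫⁻ p in Set.Ioi (0:ℝ),
    ENNReal.ofReal (min PY (PX/p) * (p/(1+p)^2)) / ENNReal.ofReal (L' p) with hIWdef
  set Z : Set ℝ := Set.Ioi 0 ∩ L' ⁻¹' {0} with hZdef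
  have hZm : MeasurableSet Z := measurableSet_Ioi.inter (hL'm (measurableSet_singleton 0))
  by_cases hZ : volume Z = 0
  · -- a.e. positive liquidity: Cauchy–Schwarz
    have hpos' : ∀ᵐ p ∂(volume.restrict (Set.Ioi (0:ℝ))), 0 < L' p := by
      have h1 : volume.restrict (Set.Ioi (0:ℝ)) Z = 0 := by
        apply le_antisymm _ (by simp)
        rw [Measure.restrict_apply hZm]
        exact le_trans (measure_mono Set.inter_subset_left) hZ.le
      have h2 : ∀ᵐ p ∂(volume.restrict (Set.Ioi (0:ℝ))), p ∉ Z :=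
        measure_eq_zero_iff_ae_notMem.mp h1
      filter_upwards [h2, ae_restrict_mem measurableSet_Ioi] with p hpZ hp
      exact (hL'0 p hp).lt_of_ne' (fun h0 => hpZ ⟨hp, h0⟩)
    set bb : ℝ → ℝ := fun p => if p ≤ t then PY/p else PX/p^2 with hbbdef
    set f : ℝ → ℝ≥0∞ := fun p =>
      (ENNReal.ofReal (min PY (PX/p) * (p/(1+p)^2)) / ENNReal.ofReal (L' p)) ^ (1/2 : ℝ)
      with hfdef
    set g : ℝ → ℝ≥0∞ := fun p =>
      (ENNReal.ofReal (bb p) * ENNReal.ofReal (L' p)) ^ (1/2 : ℝ) with hgdef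
    have hfm : Measurable f := by
      apply ENNReal.continuous_rpow_const.measurable.comp
      exact (ENNReal.measurable_ofReal.comp
        ((measurable_const.min (measurable_const.div measurable_id)).mul
          (measurable_id.div ((measurable_const.add measurable_id).pow_const 2)))).div
        (ENNReal.measurable_ofReal.comp hL'm)
    have hbbm : Measurable bb := Measurable.ite measurableSet_Iic
      (measurable_const.div measurable_id) (measurable_const.div (measurable_id.pow_const 2))
    have hgm : Measurable g := by
      apply ENNReal.continuous_rpow_const.measurable.comp
      exact (ENNReal.measurable_ofReal.comp hbbm).mul (ENNReal.measurable_ofReal.comp hL'm)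
    have hconj : Real.HolderConjugate 2 2 := Real.HolderConjugate.two_two
    have hHo := ENNReal.lintegral_mul_le_Lp_mul_Lq (volume.restrict (Set.Ioi (0:ℝ)))
      hconj hfm.aemeasurable hgm.aemeasurable
    have hfsq : ∀ p, f p ^ (2:ℝ)
        = ENNReal.ofReal (min PY (PX/p) * (p/(1+p)^2)) / ENNReal.ofReal (L' p) := by
      intro p
      rw [hfdef]
      simp only
      rw [← ENNReal.rpow_mul, show (1/2 : ℝ) * 2 = 1 by norm_num, ENNReal.rpow_one]
    have hgsq : ∀ p, g p ^ (2:ℝ) = ENNReal.ofReal (bb p) * ENNReal.ofReal (L' p) := by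
      intro p
      rw [hgdef]
      simp only
      rw [← ENNReal.rpow_mul, show (1/2 : ℝ) * 2 = 1 by norm_num, ENNReal.rpow_one]
    -- the budget constraint bounds ∫ g²
    have Cb : ∫⁻ p in Set.Ioi (0:ℝ), ENNReal.ofReal (bb p) * ENNReal.ofReal (L' p)
        ≤ ENNReal.ofReal B := by
      rw [← Set.Ioc_union_Ioi_eq_Ioi ht.le,
        lintegral_union measurableSet_Ioi (Set.Ioc_disjoint_Ioi le_rfl)]
      have c1 : ∫⁻ p in Set.Ioc (0:ℝ) t, ENNReal.ofReal (bb p) * ENNReal.ofReal (L' p)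
          = ∫⁻ p in Set.Ioc (0:ℝ) t, ENNReal.ofReal PY * ENNReal.ofReal (L' p / p) := by
        apply setLIntegral_congr_fun_ae measurableSet_Ioc
        filter_upwards with p hp
        have h1 : (0:ℝ) < p := hp.1
        rw [hbbdef]
        simp only
        rw [if_pos hp.2, ← ENNReal.ofReal_mul (div_nonneg hPY.le h1.le),
          show (PY/p) * L' p = PY * (L' p / p) by ring, ENNReal.ofReal_mul hPY.le]
      have c2 : ∫⁻ p in Set.Ioi t, ENNReal.ofReal (bb p) * ENNReal.ofReal (L' p)
          = ∫⁻ p in Set.Ioi t, ENNReal.ofReal PX * ENNReal.ofReal (L' p / p ^ 2) := by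
        apply setLIntegral_congr_fun_ae measurableSet_Ioi
        filter_upwards with p hp
        have h1 : (0:ℝ) < p := lt_trans ht hp
        rw [hbbdef]
        simp only
        rw [if_neg (not_le.2 hp), ← ENNReal.ofReal_mul (div_nonneg hPX.le (by positivity)),
          show (PX/p^2) * L' p = PX * (L' p / p ^ 2) by ring, ENNReal.ofReal_mul hPX.le]
      rw [c1, c2, lintegral_const_mul' _ _ ENNReal.ofReal_ne_top,
        lintegral_const_mul' _ _ ENNReal.ofReal_ne_top]
      calc ENNReal.ofReal PY * (∫⁻ p in Set.Ioc (0:ℝ) t, ENNReal.ofReal (L' p / p))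
            + ENNReal.ofReal PX * (∫⁻ p in Set.Ioi t, ENNReal.ofReal (L' p / p ^ 2))
          ≤ ENNReal.ofReal PY * ENNReal.ofReal Y0' + ENNReal.ofReal PX * ENNReal.ofReal X0' :=
            add_le_add (mul_le_mul_right hYint _) (mul_le_mul_right hXint _)
        _ = ENNReal.ofReal (PY * Y0' + PX * X0') := by
            rw [← ENNReal.ofReal_mul hPY.le, ← ENNReal.ofReal_mul hPX.le,
              ← ENNReal.ofReal_add (mul_nonneg hPY.le hY0') (mul_nonneg hPX.le hX0')]
        _ ≤ ENNReal.ofReal B := ENNReal.ofReal_le_ofReal (by linarith)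
    -- ∫ f·g = M
    have hfgae : ∀ᵐ p ∂(volume.restrict (Set.Ioi (0:ℝ))), (f * g) p
        = ENNReal.ofReal (if p ≤ t then PY * (1+p)⁻¹ else PX * (p*(1+p))⁻¹) := by
      filter_upwards [hpos', ae_restrict_mem measurableSet_Ioi] with p hLp hp
      have h1 : (0:ℝ) < p := hp
      have h2 : (0:ℝ) < 1 + p := by linarith
      have hC0 : ENNReal.ofReal (L' p) ≠ 0 := (ENNReal.ofReal_pos.2 hLp).ne'
      have hWnn : 0 ≤ min PY (PX/p) * (p/(1+p)^2) :=
        mul_nonneg (le_min hPY.le (div_nonneg hPX.le h1.le))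
          (div_nonneg h1.le (by positivity))
      have hu : 0 ≤ (if p ≤ t then PY * (1+p)⁻¹ else PX * (p*(1+p))⁻¹) := by
        by_cases hpt : p ≤ t
        · rw [if_pos hpt]; positivity
        · rw [if_neg hpt]; positivity
      have hWb : (min PY (PX/p) * (p/(1+p)^2)) * bb p
          = (if p ≤ t then PY * (1+p)⁻¹ else PX * (p*(1+p))⁻¹) ^ 2 := by
        rw [hbbdef]
        simp only
        by_cases hpt : p ≤ t
        · rw [if_pos hpt, if_pos hpt, min_eq_left ((le_div_iff₀ h1).2
            (by rw [mul_comm]; exact (le_div_iff₀ hPY).1 hpt))]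
          field_simp
        · rw [if_neg hpt, if_neg hpt, min_eq_right ((div_le_iff₀ h1).2
            (by nlinarith [(div_lt_iff₀ hPY).1 (not_le.1 hpt)]))]
          field_simp
      have hmul : f p * g p = ((ENNReal.ofReal (min PY (PX/p) * (p/(1+p)^2))
          * ENNReal.ofReal (bb p))) ^ (1/2 : ℝ) := by
        rw [hfdef, hgdef]
        simp only
        rw [← ENNReal.mul_rpow_of_nonneg _ _ (by norm_num : (0:ℝ) ≤ 1/2)]
        congr 1
        rw [div_eq_mul_inv, show ENNReal.ofReal (min PY (PX/p) * (p/(1+p)^2))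
            * (ENNReal.ofReal (L' p))⁻¹ * (ENNReal.ofReal (bb p) * ENNReal.ofReal (L' p))
          = ENNReal.ofReal (min PY (PX/p) * (p/(1+p)^2)) * ENNReal.ofReal (bb p)
            * (ENNReal.ofReal (L' p) * (ENNReal.ofReal (L' p))⁻¹) by ring,
          ENNReal.mul_inv_cancel hC0 ENNReal.ofReal_ne_top, mul_one]
      have : (f * g) p = f p * g p := rfl
      rw [this, hmul, ← ENNReal.ofReal_mul hWnn, hWb,
        ENNReal.ofReal_rpow_of_nonneg (sq_nonneg _) (by norm_num : (0:ℝ) ≤ 1/2),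
        one_div, show (2:ℝ) = ((2:ℕ):ℝ) by norm_num]
      rw [show ((if p ≤ t then PY * (1+p)⁻¹ else PX * (p*(1+p))⁻¹) ^ (2:ℕ))
          ^ ((((2:ℕ):ℝ))⁻¹) = (if p ≤ t then PY * (1+p)⁻¹ else PX * (p*(1+p))⁻¹) from
        Real.pow_rpow_inv_natCast hu two_ne_zero]
    have hfgint : ∫⁻ p in Set.Ioi (0:ℝ), (f * g) p = ENNReal.ofReal M := by
      rw [lintegral_congr_ae hfgae, Jint hPX.le hPY.le ht]
    -- combine
    have hMle : ENNReal.ofReal M ≤ IW ^ (1/2 : ℝ) * (ENNReal.ofReal B) ^ (1/2 : ℝ) := by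
      calc ENNReal.ofReal M = ∫⁻ p in Set.Ioi (0:ℝ), (f * g) p := hfgint.symm
        _ ≤ (∫⁻ p in Set.Ioi (0:ℝ), f p ^ (2:ℝ)) ^ (1/2 : ℝ)
            * (∫⁻ p in Set.Ioi (0:ℝ), g p ^ (2:ℝ)) ^ (1/2 : ℝ) := hHo
        _ = IW ^ (1/2 : ℝ)
            * (∫⁻ p in Set.Ioi (0:ℝ), ENNReal.ofReal (bb p) * ENNReal.ofReal (L' p))
              ^ (1/2 : ℝ) := by
            rw [hIWdef]
            congr 1
            · congr 1
              exact lintegral_congr fun p => hfsq p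
            · congr 1
              exact lintegral_congr fun p => hgsq p
        _ ≤ IW ^ (1/2 : ℝ) * (ENNReal.ofReal B) ^ (1/2 : ℝ) :=
            mul_le_mul_right (ENNReal.rpow_le_rpow Cb (by norm_num)) _
    by_cases hIW : IW = ⊤
    · rw [hIW]; exact le_top
    · have h2 := ENNReal.rpow_le_rpow hMle (by norm_num : (0:ℝ) ≤ 2)
      rw [ENNReal.mul_rpow_of_nonneg _ _ (by norm_num : (0:ℝ) ≤ 2),
        ← ENNReal.rpow_mul, ← ENNReal.rpow_mul,
        show (1/2 : ℝ) * 2 = 1 by norm_num, ENNReal.rpow_one, ENNReal.rpow_one,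
        ENNReal.ofReal_rpow_of_nonneg hM0.le (by norm_num : (0:ℝ) ≤ 2),
        show M ^ (2:ℝ) = M * M by
          rw [show (2:ℝ) = ((2:ℕ):ℝ) by norm_num, Real.rpow_natCast]; ring] at h2
      have h3 : ENNReal.ofReal (M * M) / ENNReal.ofReal B ≤ IW :=
        ENNReal.div_le_of_le_mul h2
      rw [ENNReal.ofReal_div_of_pos hB]
      exact h3
  · -- liquidity vanishes on a positive measure set: infinite inefficiency
    have h1 : ∫⁻ p in Z,
        ENNReal.ofReal (min PY (PX/p) * (p/(1+p)^2)) / ENNReal.ofReal (L' p) = ⊤ := by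
      have e : ∀ᵐ p ∂volume, p ∈ Z →
          ENNReal.ofReal (min PY (PX/p) * (p/(1+p)^2)) / ENNReal.ofReal (L' p)
          = (⊤ : ℝ≥0∞) := by
        filter_upwards with p hp
        have h1 : (0:ℝ) < p := hp.1
        have hL0 : L' p = 0 := hp.2
        have hWpos : 0 < min PY (PX/p) * (p/(1+p)^2) :=
          mul_pos (lt_min hPY (div_pos hPX h1)) (div_pos h1 (by positivity))
        rw [hL0, ENNReal.ofReal_zero, ENNReal.div_zero (ENNReal.ofReal_pos.2 hWpos).ne']
      rw [setLIntegral_congr_fun_ae hZm e, setLIntegral_const, ENNReal.top_mul hZ]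
    have h2 : (⊤ : ℝ≥0∞) ≤ IW := by
      rw [hIWdef, ← h1]
      exact lintegral_mono_set Set.inter_subset_left
    exact le_trans le_top h2
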